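/- If v₁, …, vₙ is an orthonormal basis of eigenvectors of Lᵀ H L with Lᵀ H L vᵢ = λᵢ vᵢ, and uᵢ = L vᵢ, then (H + Γ_pr⁻¹)⁻¹ = Γ_pr − Σ_{i=1}^n (λᵢ/(1+λᵢ)) uᵢ uᵢᵀ; i.e. the exact posterior covariance is the prior covariance minus a weighted sum of outer products of the directions uᵢ with weights λᵢ/(1+λᵢ). -/

import Mathlib

open Matrix

/-- if `v₁,…,vₙ` is an orthonormal basis of eigenvectors of `LᵀHL`
with eigenvalues `λᵢ`, and `uᵢ = L vᵢ`, then
`(H + Γ_pr⁻¹)⁻¹ = Γ_pr − Σᵢ (λᵢ/(1+λᵢ)) uᵢ uᵢᵀ`. -/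
theorem stmt_6 {n : ℕ} (hn : 1 ≤ n)
    (Γpr L H : Matrix (Fin n) (Fin n) ℝ)
    (hΓpr : Γpr.PosDef) (hL : IsUnit L.det) (hLL : Γpr = L * Lᵀ)
    (hH : H.PosSemidef)
    (v : Fin n → Fin n → ℝ) (lam : Fin n → ℝ)
    (hON : ∀ i j, v i ⬝ᵥ v j = if i = j then (1 : ℝ) else 0)
    (heig : ∀ i, (Lᵀ * H * L) *ᵥ v i = lam i • v i)
    (u : Fin n → Fin n → ℝ) (hu : ∀ i, u i = L *ᵥ v i) :
    (H + Γpr⁻¹)⁻¹ = Γpr - ∑ i : Fin n, (lam i / (1 + lam i)) • vecMulVec (u i) (u i) := by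
  set M : Matrix (Fin n) (Fin n) ℝ := Lᵀ * H * L with hM
  have hLT : IsUnit Lᵀ.det := by rwa [Matrix.det_transpose]
  have hLinv : L⁻¹ * L = 1 := Matrix.nonsing_inv_mul L hL
  have hLinv' : L * L⁻¹ = 1 := Matrix.mul_nonsing_inv L hL
  have hLTinv : Lᵀ⁻¹ * Lᵀ = 1 := Matrix.nonsing_inv_mul Lᵀ hLT
  have hLTinv' : Lᵀ * Lᵀ⁻¹ = 1 := Matrix.mul_nonsing_inv Lᵀ hLT
  -- eigenvalues are nonnegative
  have hlam : ∀ i, 0 ≤ lam i := by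
    intro i
    have h1 : v i ⬝ᵥ (M *ᵥ v i) = lam i := by
      rw [heig i, dotProduct_smul, hON i i]
      simp
    have h2 : v i ⬝ᵥ (M *ᵥ v i) = (L *ᵥ v i) ⬝ᵥ (H *ᵥ (L *ᵥ v i)) := by
      rw [hM]
      rw [← Matrix.mulVec_mulVec, ← Matrix.mulVec_mulVec]
      rw [Matrix.dotProduct_mulVec, Matrix.vecMul_transpose]
    have h3 := hH.dotProduct_mulVec_nonneg (L *ᵥ v i)
    simp only [RCLike.re_to_real, star_trivial] at h3
    rw [← h1, h2]
    exact h3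
  have hne : ∀ i, (1 : ℝ) + lam i ≠ 0 := fun i => by
    have := hlam i; intro h; linarith
  -- completeness of the orthonormal family
  set V : Matrix (Fin n) (Fin n) ℝ := Matrix.of fun k i => v i k with hV
  have hVtV : Vᵀ * V = 1 := by
    ext i j
    simpa [Matrix.mul_apply, dotProduct, Matrix.one_apply, hV] using hON i j
  have hVVt : V * Vᵀ = 1 := mul_eq_one_comm.mp hVtV
  have hsum : ∑ i : Fin n, vecMulVec (v i) (v i) = 1 := by
    rw [← hVVt]
    ext k l
    simp [Matrix.mul_apply, vecMulVec_apply, Matrix.sum_apply, hV]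
  -- M times a projector
  have hMP : ∀ i, M * vecMulVec (v i) (v i) = lam i • vecMulVec (v i) (v i) := by
    intro i
    ext k l
    have : (M * vecMulVec (v i) (v i)) k l = (M *ᵥ v i) k * v i l := by
      simp [Matrix.mul_apply, Matrix.mulVec, dotProduct, vecMulVec_apply,
        Finset.sum_mul, mul_assoc]
    rw [this, heig i]
    simp [vecMulVec_apply]
    ring
  -- spectral decomposition of M
  have hMspec : M = ∑ i : Fin n, lam i • vecMulVec (v i) (v i) := by
    calc M = M * ∑ i : Fin n, vecMulVec (v i) (v i) := by rw [hsum, Matrix.mul_one]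
    _ = ∑ i : Fin n, lam i • vecMulVec (v i) (v i) := by
        rw [Finset.mul_sum]
        exact Finset.sum_congr rfl fun i _ => hMP i
  set S : Matrix (Fin n) (Fin n) ℝ :=
    ∑ i : Fin n, (lam i / (1 + lam i)) • vecMulVec (v i) (v i) with hS
  -- key inverse identity
  have hkey : (M + 1) * (1 - S) = 1 := by
    have hMS : M * S = ∑ i : Fin n, (lam i / (1 + lam i) * lam i) • vecMulVec (v i) (v i) := by
      rw [hS, Finset.mul_sum]
      refine Finset.sum_congr rfl fun i _ => ?_
      rw [Matrix.mul_smul, hMP i, smul_smul, mul_comm]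
    have hMSS : M * S + S = M := by
      rw [hMS, hS, hMspec, ← Finset.sum_add_distrib]
      refine Finset.sum_congr rfl fun i _ => ?_
      rw [← add_smul]
      congr 1
      have h := hne i
      field_simp
      ring
    have hexp : (M + 1) * (1 - S) = M + 1 - (M * S + S) := by noncomm_ring
    rw [hexp, hMSS]
    abel
  -- rewrite H + Γpr⁻¹
  have hfac : H + Γpr⁻¹ = Lᵀ⁻¹ * (M + 1) * L⁻¹ := by
    rw [hLL, Matrix.mul_inv_rev, hM]
    rw [Matrix.mul_add, Matrix.add_mul, Matrix.mul_one]
    congr 1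
    rw [show Lᵀ⁻¹ * (Lᵀ * H * L) = Lᵀ⁻¹ * Lᵀ * H * L by noncomm_ring]
    rw [hLTinv, Matrix.one_mul, Matrix.mul_assoc, hLinv', Matrix.mul_one]
  -- rewrite RHS
  have hRHS : Γpr - ∑ i : Fin n, (lam i / (1 + lam i)) • vecMulVec (u i) (u i)
      = L * (1 - S) * Lᵀ := by
    have huu : ∀ i, vecMulVec (u i) (u i) = L * vecMulVec (v i) (v i) * Lᵀ := by
      intro i
      ext k l
      simp [hu, vecMulVec_apply, Matrix.mul_apply, Matrix.mulVec, dotProduct,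
        Matrix.transpose_apply, Finset.sum_mul, Finset.mul_sum]
      refine Finset.sum_congr rfl fun a _ => Finset.sum_congr rfl fun b _ => by ring
    rw [Matrix.mul_sub, Matrix.sub_mul, Matrix.mul_one, hLL, hS]
    congr 1
    rw [Finset.mul_sum, Finset.sum_mul]
    refine Finset.sum_congr rfl fun i _ => ?_
    rw [huu i, Matrix.mul_smul, Matrix.smul_mul]
  rw [hRHS]
  apply Matrix.inv_eq_right_inv
  rw [hfac]
  calc Lᵀ⁻¹ * (M + 1) * L⁻¹ * (L * (1 - S) * Lᵀ)
      = Lᵀ⁻¹ * ((M + 1) * ((L⁻¹ * L) * (1 - S)) * Lᵀ) := by noncomm_ring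
    _ = 1 := by rw [hLinv, Matrix.one_mul, hkey, Matrix.one_mul, hLTinv]
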